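/- Let N ≥ 1, let g be a real symmetric N×N matrix, let u be a real N×N matrix with entries u^a{}_μ, and set G₀ := uᵀ g u. Let F : Matrix N N ℝ → ℝ be differentiable at G₀ with symmetric gradient there, i.e. writing T_{μν} := (∂F/∂G_{μν})(G₀) one has T_{μν} = T_{νμ}. Define L̃ : Matrix N N ℝ → ℝ by L̃(w) := F(wᵀ g w). Then for all indices μ, ν: Σ_a (∂L̃/∂u^a{}_μ)(u) · u^a{}_ν = 2 Σ_ρ T_{μρ} (G₀)_{ρν}. -/

import Mathlib

open Matrix BigOperators

/-- Norm on matrices (sup norm coming from the Pi structure); used to do calculus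
on matrix-valued variables. -/
noncomputable instance matrixNormedAddCommGroup {α β : Type*} [Fintype α] [Fintype β] :
    NormedAddCommGroup (Matrix α β ℝ) :=
  inferInstanceAs (NormedAddCommGroup (α → β → ℝ))

noncomputable instance matrixNormedSpace {α β : Type*} [Fintype α] [Fintype β] :
    NormedSpace ℝ (Matrix α β ℝ) :=
  inferInstanceAs (NormedSpace ℝ (α → β → ℝ))

/-- Partial derivative `∂_μ f (x)` of a scalar function on `ℝ^N`. -/
noncomputable def pd {N : ℕ} (f : (Fin N → ℝ) → ℝ) (μ : Fin N) (x : Fin N → ℝ) : ℝ :=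
  fderiv ℝ f x (Pi.single μ 1)

/-- Jacobian matrix `(Df(x))^a{}_μ = ∂_μ f^a (x)` of a map `ℝ^N → ℝ^M`. -/
noncomputable def jac {N M : ℕ} (f : (Fin N → ℝ) → (Fin M → ℝ)) (x : Fin N → ℝ) :
    Matrix (Fin M) (Fin N) ℝ :=
  Matrix.of fun a μ => fderiv ℝ f x (Pi.single μ 1) a

noncomputable def myB {N : ℕ} (g : Matrix (Fin N) (Fin N) ℝ) :
    Matrix (Fin N) (Fin N) ℝ →ₗ[ℝ] Matrix (Fin N) (Fin N) ℝ →ₗ[ℝ] Matrix (Fin N) (Fin N) ℝ :=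
  LinearMap.mk₂ ℝ (fun x y => xᵀ * g * y)
    (by intro x y z; simp [Matrix.transpose_add, Matrix.add_mul])
    (by intro c x y; simp [Matrix.transpose_smul, Matrix.smul_mul])
    (by intro x y z; simp [Matrix.mul_add])
    (by intro c x y; simp [Matrix.mul_smul])

noncomputable def myBc {N : ℕ} (g : Matrix (Fin N) (Fin N) ℝ) :
    Matrix (Fin N) (Fin N) ℝ →L[ℝ] Matrix (Fin N) (Fin N) ℝ →L[ℝ] Matrix (Fin N) (Fin N) ℝ :=
  LinearMap.toContinuousLinearMap
    ((LinearMap.toContinuousLinearMap :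
        (Matrix (Fin N) (Fin N) ℝ →ₗ[ℝ] Matrix (Fin N) (Fin N) ℝ) ≃ₗ[ℝ] _).toLinearMap ∘ₗ myB g)

lemma clm_expand {N : ℕ} (φ : Matrix (Fin N) (Fin N) ℝ →L[ℝ] ℝ) (A : Matrix (Fin N) (Fin N) ℝ) :
    φ A = ∑ i, ∑ j, A i j * φ (Matrix.single i j 1) := by
  conv_lhs => rw [matrix_eq_sum_single A]
  rw [map_sum]
  refine Finset.sum_congr rfl fun i _ => ?_
  rw [map_sum]
  refine Finset.sum_congr rfl fun j _ => ?_
  rw [show Matrix.single i j (A i j) = A i j • Matrix.single i j 1 by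
      rw [Matrix.smul_single, smul_eq_mul, mul_one],
    _root_.map_smul, smul_eq_mul]


/-- contraction identity for the covariance-field multimomenta.
If `G₀ = uᵀ g u`, `F` is differentiable at `G₀` with symmetric gradient
`T μ ν := ∂F/∂G_{μν}(G₀)`, and `L̃(w) := F(wᵀ g w)`, then
`Σ_a ∂L̃/∂u^a{}_μ (u) · u^a{}_ν = 2 Σ_ρ T_{μρ} (G₀)_{ρν}`. -/
theorem covariance_field_contraction
    {N : ℕ} (hN : 1 ≤ N)
    (g u : Matrix (Fin N) (Fin N) ℝ) (hg : g.IsSymm)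
    (F : Matrix (Fin N) (Fin N) ℝ → ℝ)
    (G₀ : Matrix (Fin N) (Fin N) ℝ) (hG₀ : G₀ = uᵀ * g * u)
    (hF : DifferentiableAt ℝ F G₀)
    (T : Fin N → Fin N → ℝ)
    (hT : ∀ μ ν, T μ ν = fderiv ℝ F G₀ (Matrix.single μ ν 1))
    (hTsymm : ∀ μ ν, T μ ν = T ν μ)
    (Ltil : Matrix (Fin N) (Fin N) ℝ → ℝ)
    (hLtil : ∀ w, Ltil w = F (wᵀ * g * w)) :
    ∀ μ ν, ∑ a, fderiv ℝ Ltil u (Matrix.single a μ 1) * u a ν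
      = 2 * ∑ ρ, T μ ρ * G₀ ρ ν := by
  intro μ ν
  classical
  set φ := fderiv ℝ F G₀ with hφ
  set D : Matrix (Fin N) (Fin N) ℝ →L[ℝ] Matrix (Fin N) (Fin N) ℝ :=
    (myBc g).precompR _ u (ContinuousLinearMap.id ℝ _) +
      (myBc g).precompL _ (ContinuousLinearMap.id ℝ _) u with hD
  have hQ : HasFDerivAt (fun w : Matrix (Fin N) (Fin N) ℝ => wᵀ * g * w) D u := by
    have h := (myBc g).hasFDerivAt_of_bilinear (hasFDerivAt_id u) (hasFDerivAt_id u)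
    convert h using 2
    all_goals rfl
  have hDval : ∀ E, D E = uᵀ * g * E + Eᵀ * g * u := by
    intro E
    simp [hD, ContinuousLinearMap.precompR, ContinuousLinearMap.precompL, myBc, myB]
  have hFd : HasFDerivAt F φ (uᵀ * g * u) := hG₀ ▸ hF.hasFDerivAt
  have hcomp : HasFDerivAt Ltil (φ.comp D) u := by
    have hL : Ltil = fun w => F (wᵀ * g * w) := funext hLtil
    rw [hL]
    have h2 : HasFDerivAt (F ∘ fun w : Matrix (Fin N) (Fin N) ℝ => wᵀ * g * w) (φ.comp D) u :=
      HasFDerivAt.comp (f := fun w : Matrix (Fin N) (Fin N) ℝ => wᵀ * g * w) u hFd hQ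
    exact h2
  have hfd : fderiv ℝ Ltil u = φ.comp D := hcomp.fderiv
  have e1 : ∀ a i j, (uᵀ * g * Matrix.single a μ (1:ℝ)) i j
      = if j = μ then (uᵀ * g) i a else 0 := by
    intro a i j
    by_cases h : μ = j <;>
      simp [Matrix.mul_apply, Matrix.single, ite_and, h, eq_comm]
  have e2 : ∀ a i j, ((Matrix.single a μ (1:ℝ))ᵀ * g * u) i j
      = if i = μ then (g * u) a j else 0 := by
    intro a i j
    by_cases h : μ = i <;>
      simp [Matrix.mul_apply, Matrix.single, ite_and, h, eq_comm,
        Finset.mul_sum, mul_comm, mul_left_comm]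
  have hGT : G₀ᵀ = G₀ := by
    rw [hG₀]
    simp [Matrix.transpose_mul, Matrix.mul_assoc, hg.eq]
  have hGsymm : ∀ i j, G₀ i j = G₀ j i := by
    intro i j
    calc G₀ i j = G₀ᵀ j i := rfl
      _ = G₀ j i := by rw [hGT]
  calc ∑ a, fderiv ℝ Ltil u (Matrix.single a μ 1) * u a ν
      = ∑ a, (φ (uᵀ * g * Matrix.single a μ 1)
          + φ ((Matrix.single a μ 1)ᵀ * g * u)) * u a ν := by
        refine Finset.sum_congr rfl fun a _ => ?_
        rw [hfd]
        simp only [ContinuousLinearMap.comp_apply]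
        rw [hDval, map_add]
    _ = ∑ a, ((∑ i, (uᵀ * g) i a * T i μ) + (∑ j, (g * u) a j * T μ j)) * u a ν := by
        refine Finset.sum_congr rfl fun a _ => ?_
        congr 1
        congr 1
        · rw [clm_expand]
          refine Finset.sum_congr rfl fun i _ => ?_
          simp [e1, ite_mul, hT]
        · rw [clm_expand, Finset.sum_comm]
          refine Finset.sum_congr rfl fun j _ => ?_
          simp [-Matrix.transpose_single, e2, ite_mul, hT]
    _ = (∑ i, T i μ * (∑ a, (uᵀ * g) i a * u a ν))
          + (∑ j, T μ j * (∑ a, (g * u) a j * u a ν)) := by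
        simp only [add_mul, Finset.sum_add_distrib, Finset.sum_mul, Finset.mul_sum]
        congr 1
        · rw [Finset.sum_comm]
          exact Finset.sum_congr rfl fun i _ => Finset.sum_congr rfl fun a _ => by ring
        · rw [Finset.sum_comm]
          exact Finset.sum_congr rfl fun j _ => Finset.sum_congr rfl fun a _ => by ring
    _ = (∑ i, T i μ * G₀ i ν) + (∑ j, T μ j * G₀ j ν) := by
        congr 1
        · refine Finset.sum_congr rfl fun i _ => ?_
          rw [hG₀, Matrix.mul_apply]
        · refine Finset.sum_congr rfl fun j _ => ?_
          congr 1
          rw [hGsymm j ν, hG₀, Matrix.mul_assoc, Matrix.mul_apply]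
          exact Finset.sum_congr rfl fun a _ => by
            simp [Matrix.transpose_apply, mul_comm]
    _ = 2 * ∑ ρ, T μ ρ * G₀ ρ ν := by
        rw [two_mul]
        congr 1
        exact Finset.sum_congr rfl fun i _ => by rw [hTsymm i μ]
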